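/- Let (x_i) be an arbitrary mesh 0 = x_0 < x_1 < ... < x_N = 1, with h_i = x_i - x_{i-1}, ħ_i = (h_i + h_{i+1})/2. Define D⁻Z_i = (Z_i - Z_{i-1})/h_i, D⁺Z_i = (Z_{i+1} - Z_i)/h_{i+1}, δ²Z_i = (D⁺Z_i - D⁻Z_i)/ħ_i, and δ̂²Z_i = (1/ħ_i)((h_{i+1}/h_i) D⁺Z_i - (ħ_i/ħ_{i-1}) D⁻Z_i). Then for any mesh function Z, δ̂²(D⁻Z)_i = D⁻(δ²Z)_i for all interior indices where both sides are defined. -/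

import Mathlib

/-- Mesh step `h_i = x_i - x_{i-1}`. -/
noncomputable def meshH (x : ℕ → ℝ) (i : ℕ) : ℝ := x i - x (i - 1)

/-- Average step `ħ_i = (h_i + h_{i+1})/2`. -/
noncomputable def meshHbar (x : ℕ → ℝ) (i : ℕ) : ℝ := (meshH x i + meshH x (i + 1)) / 2

/-- Backward difference. -/
noncomputable def Dminus (x : ℕ → ℝ) (Z : ℕ → ℝ) (i : ℕ) : ℝ := (Z i - Z (i - 1)) / meshH x i

/-- Forward difference. -/
noncomputable def Dplus (x : ℕ → ℝ) (Z : ℕ → ℝ) (i : ℕ) : ℝ := (Z (i + 1) - Z i) / meshH x (i + 1)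

/-- Standard second difference `δ²`. -/
noncomputable def delta2 (x : ℕ → ℝ) (Z : ℕ → ℝ) (i : ℕ) : ℝ :=
  (Dplus x Z i - Dminus x Z i) / meshHbar x i

/-- Modified second difference `δ̂²`. -/
noncomputable def deltaHat2 (x : ℕ → ℝ) (Z : ℕ → ℝ) (i : ℕ) : ℝ :=
  (1 / meshHbar x i) * ((meshH x (i + 1) / meshH x i) * Dplus x Z i
    - (meshHbar x i / meshHbar x (i - 1)) * Dminus x Z i)

/-- On an arbitrary mesh, `δ̂² (D⁻ Z) = D⁻ (δ² Z)` at interior points. -/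
theorem deltaHat2_Dminus_comm (N : ℕ) (x : ℕ → ℝ)
    (hmesh : ∀ i, i < N → x i < x (i + 1)) (Z : ℕ → ℝ) :
    ∀ i, 2 ≤ i → i + 1 ≤ N →
      deltaHat2 x (Dminus x Z) i = Dminus x (delta2 x Z) i := by
  intro i hi hN
  obtain ⟨k, rfl⟩ : ∃ k, i = k + 2 := ⟨i - 2, by omega⟩
  have ha : 0 < x (k + 1) - x k := sub_pos.mpr (hmesh k (by omega))
  have hb : 0 < x (k + 2) - x (k + 1) := sub_pos.mpr (hmesh (k + 1) (by omega))
  have hc : 0 < x (k + 3) - x (k + 2) := sub_pos.mpr (hmesh (k + 2) (by omega))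
  simp only [deltaHat2, Dminus, delta2, Dplus, meshHbar, meshH, Nat.add_sub_cancel,
    show k + 2 + 1 = k + 3 from rfl, show k + 1 + 1 = k + 2 from rfl,
    show k + 2 - 1 = k + 1 from rfl, show k + 3 - 1 = k + 2 from rfl]
  set u := x (k + 1) - x k with hu
  set v := x (k + 2) - x (k + 1) with hv
  set w := x (k + 3) - x (k + 2) with hw
  set p := Z (k + 1) - Z k with hp
  set q := Z (k + 2) - Z (k + 1) with hq
  set r := Z (k + 3) - Z (k + 2) with hr
  have hu0 : u ≠ 0 := ne_of_gt ha
  have hv0 : v ≠ 0 := ne_of_gt hb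
  have hw0 : w ≠ 0 := ne_of_gt hc
  have huv : u + v ≠ 0 := by positivity
  have hvw : v + w ≠ 0 := by positivity
  field_simp
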